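/- Let (S_t)_{t≥0} be a strongly continuous semigroup on a Banach space X, let B ⊂ X be nonempty, convex, closed, bounded and invariant (S_t(B) ⊂ B for all t), and suppose there exist constants C ≥ 1 and γ > 0 such that ‖S_t f - S_t h‖ ≤ C e^{-γ t} ‖f - h‖ for all f, h ∈ B and t ≥ 0. Assume B is weakly sequentially compact. Then there exists a unique u ∈ B with S_t u = u for all t ≥ 0. -/

import Mathlib

open Filter Topology

/-- Abstract fixed-point argument: a strongly continuous semigroup which is an
exponential contraction on a nonempty convex closed bounded invariant, weakly
sequentially compact set B admits a unique common fixed point in B. -/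
theorem semigroup_unique_fixed_point {X : Type*} [NormedAddCommGroup X]
    [NormedSpace ℝ X] (S : ℝ → X →L[ℝ] X)
    (hS0 : S 0 = ContinuousLinearMap.id ℝ X)
    (hSsem : ∀ s t : ℝ, 0 ≤ s → 0 ≤ t → S (s + t) = (S s).comp (S t))
    (hScont : ∀ x : X, Continuous fun t : ℝ => S t x)
    (B : Set X) (hBne : B.Nonempty) (hBconv : Convex ℝ B) (hBcl : IsClosed B)
    (hBbdd : Bornology.IsBounded B)
    (hBinv : ∀ t ≥ (0:ℝ), ∀ f ∈ B, S t f ∈ B)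
    (C γ : ℝ) (hC : 1 ≤ C) (hγ : 0 < γ)
    (hcontr : ∀ t ≥ (0:ℝ), ∀ f ∈ B, ∀ h ∈ B,
        ‖S t f - S t h‖ ≤ C * Real.exp (-γ * t) * ‖f - h‖)
    (hBweakcpt : ∀ f : ℕ → X, (∀ n, f n ∈ B) →
        ∃ u ∈ B, ∃ φ : ℕ → ℕ, StrictMono φ ∧
          ∀ ℓ : X →L[ℝ] ℝ, Tendsto (fun n => ℓ (f (φ n))) atTop (𝓝 (ℓ u))) :
    ∃! u : X, u ∈ B ∧ ∀ t ≥ (0:ℝ), S t u = u := by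
  obtain ⟨f0, hf0⟩ := hBne
  obtain ⟨D, hD⟩ := Metric.isBounded_iff.mp hBbdd
  set f : ℕ → X := fun n => S n f0 with hf
  have hfB : ∀ n, f n ∈ B := fun n => hBinv n (Nat.cast_nonneg n) f0 hf0
  obtain ⟨u, huB, φ, hφ, hweak⟩ := hBweakcpt f hfB
  have hφtop : Tendsto (fun n => (φ n : ℝ)) atTop atTop :=
    tendsto_natCast_atTop_atTop.comp hφ.tendsto_atTop
  have hexp : Tendsto (fun n => Real.exp (-γ * (φ n : ℝ))) atTop (𝓝 0) := by
    apply Real.tendsto_exp_atBot.comp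
    have : Tendsto (fun n => γ * (φ n : ℝ)) atTop atTop :=
      hφtop.const_mul_atTop hγ
    simpa [neg_mul] using tendsto_neg_atBot_iff.mpr this
  have key : ∀ t ≥ (0:ℝ), S t u = u := by
    intro t ht
    by_contra hne
    have hx : S t u - u ≠ 0 := sub_ne_zero.mpr hne
    obtain ⟨ℓ, hℓ1, hℓx⟩ := exists_dual_vector ℝ (S t u - u) (norm_ne_zero_iff.mpr hx)
    have h1 : Tendsto (fun n => ℓ (S (t + (φ n : ℝ)) f0)) atTop (𝓝 (ℓ (S t u))) := by
      have := hweak (ℓ.comp (S t))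
      have heq : ∀ n : ℕ, ℓ (S (t + (φ n : ℝ)) f0) = (ℓ.comp (S t)) (f (φ n)) := by
        intro n
        simp [hSsem t (φ n : ℝ) ht (Nat.cast_nonneg _), hf]
      simpa [heq] using this
    have h2 : Tendsto (fun n => ℓ (f (φ n))) atTop (𝓝 (ℓ u)) := hweak ℓ
    have hbound : ∀ n : ℕ,
        ‖ℓ (S (t + (φ n : ℝ)) f0) - ℓ (f (φ n))‖
          ≤ (‖ℓ‖ * (C * D)) * Real.exp (-γ * (φ n : ℝ)) := by
      intro n
      have hcomm : (t + (φ n : ℝ)) = (φ n : ℝ) + t := add_comm _ _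
      have hrw : S (t + (φ n : ℝ)) f0 = S (φ n : ℝ) (S t f0) := by
        rw [hcomm, hSsem (φ n : ℝ) t (Nat.cast_nonneg _) ht]; rfl
      have hcon := hcontr (φ n : ℝ) (Nat.cast_nonneg _) (S t f0)
        (hBinv t ht f0 hf0) f0 hf0
      have hdist : ‖S t f0 - f0‖ ≤ D := by
        have := hD (hBinv t ht f0 hf0) hf0
        rwa [dist_eq_norm] at this
      calc ‖ℓ (S (t + (φ n : ℝ)) f0) - ℓ (f (φ n))‖
          = ‖ℓ (S (t + (φ n : ℝ)) f0 - f (φ n))‖ := by rw [map_sub]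
        _ ≤ ‖ℓ‖ * ‖S (t + (φ n : ℝ)) f0 - f (φ n)‖ := ℓ.le_opNorm _
        _ = ‖ℓ‖ * ‖S (φ n : ℝ) (S t f0) - S (φ n : ℝ) f0‖ := by simp only [hrw, hf]
        _ ≤ ‖ℓ‖ * (C * Real.exp (-γ * (φ n : ℝ)) * ‖S t f0 - f0‖) := by
            exact mul_le_mul_of_nonneg_left hcon (norm_nonneg _)
        _ ≤ ‖ℓ‖ * (C * Real.exp (-γ * (φ n : ℝ)) * D) := by
            apply mul_le_mul_of_nonneg_left _ (norm_nonneg _)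
            exact mul_le_mul_of_nonneg_left hdist
              (mul_nonneg (by linarith) (Real.exp_pos _).le)
        _ = (‖ℓ‖ * (C * D)) * Real.exp (-γ * (φ n : ℝ)) := by ring
    have hlim0 : Tendsto (fun n => (‖ℓ‖ * (C * D)) * Real.exp (-γ * (φ n : ℝ)))
        atTop (𝓝 0) := by simpa using hexp.const_mul (‖ℓ‖ * (C * D))
    have hdiff : Tendsto
        (fun n => ℓ (S (t + (φ n : ℝ)) f0) - ℓ (f (φ n))) atTop (𝓝 0) :=
      squeeze_zero_norm hbound hlim0
    have heq0 : ℓ (S t u) - ℓ u = 0 := tendsto_nhds_unique (h1.sub h2) hdiff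
    have : ℓ (S t u - u) = 0 := by rw [map_sub]; exact heq0
    rw [hℓx] at this
    exact hx (norm_eq_zero.mp (by exact_mod_cast this))
  refine ⟨u, ⟨huB, key⟩, ?_⟩
  rintro v ⟨hvB, hvfix⟩
  have hle : ∀ t ≥ (0:ℝ), ‖v - u‖ ≤ C * Real.exp (-γ * t) * ‖v - u‖ := by
    intro t ht
    have := hcontr t ht v hvB u huB
    rwa [hvfix t ht, key t ht] at this
  have hlim : Tendsto (fun t : ℝ => C * Real.exp (-γ * t) * ‖v - u‖) atTop (𝓝 0) := by
    have hid : Tendsto (fun t : ℝ => t) atTop atTop := tendsto_id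
    have hmul : Tendsto (fun t : ℝ => γ * t) atTop atTop :=
      hid.const_mul_atTop hγ
    have hneg : Tendsto (fun t : ℝ => -γ * t) atTop atBot := by
      simpa [neg_mul] using tendsto_neg_atBot_iff.mpr hmul
    have hexp' : Tendsto (fun t : ℝ => Real.exp (-γ * t)) atTop (𝓝 0) :=
      Real.tendsto_exp_atBot.comp hneg
    have := (hexp'.const_mul C).mul_const ‖v - u‖
    simpa using this
  have : ‖v - u‖ ≤ 0 :=
    ge_of_tendsto hlim (eventually_atTop.mpr ⟨0, fun t ht => hle t ht⟩)
  have : v - u = 0 := norm_le_zero_iff.mp this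
  exact sub_eq_zero.mp this
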